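/- Let G = Z_2^3 and let Γ be a G-grading of a Lie algebra L with L_e = 0 and satisfying [L_g,L_h] = L_{g+h} for distinct nonzero g,h, and such that whenever g,h,k generate G there exist x ∈ L_g, y ∈ L_h, z ∈ L_k with [x,[y,z]] and [y,[z,x]] linearly independent. Then an admissible map ε : G×G → ℂ is a graded contraction of Γ if and only if (b1) ε(g,h) = ε(h,g) for all g,h, and (b2) ε(g,h+k)ε(h,k) = ε(k,g+h)ε(g,h) whenever ⟨g,h,k⟩ = G. -/

import Mathlib

/-- The group `G = (ℤ/2)³`. -/
abbrev GZ : Type := ZMod 2 × ZMod 2 × ZMod 2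

/-- A `G`-grading of a complex Lie algebra `L`: a family of submodules forming an internal
direct sum decomposition and compatible with the bracket. -/
structure LieGrading (G : Type) [AddCommGroup G] [DecidableEq G]
    (L : Type) [LieRing L] [LieAlgebra ℂ L] where
  comp : G → Submodule ℂ L
  internal : DirectSum.IsInternal comp
  bracket_mem : ∀ (g h : G) (x y : L), x ∈ comp g → y ∈ comp h → ⁅x, y⁆ ∈ comp (g + h)

/-- A graded contraction of a grading `Γ`: a map `ε : G × G → ℂ` together with the contracted
product `[x,y]^ε = ε(g,h)[x,y]` (for `x ∈ L_g`, `y ∈ L_h`, extended bilinearly), which is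
required to be a Lie bracket (alternating and satisfying the Jacobi identity). -/
structure GradedContraction {G : Type} [AddCommGroup G] [DecidableEq G]
    {L : Type} [LieRing L] [LieAlgebra ℂ L] (Γ : LieGrading G L) where
  eps : G → G → ℂ
  bracket : L →ₗ[ℂ] L →ₗ[ℂ] L
  bracket_apply : ∀ (g h : G) (x y : L),
    x ∈ Γ.comp g → y ∈ Γ.comp h → bracket x y = eps g h • ⁅x, y⁆
  bracket_self : ∀ x : L, bracket x x = 0
  jacobi : ∀ x y z : L,
    bracket x (bracket y z) + bracket y (bracket z x) + bracket z (bracket x y) = 0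

/- ### Auxiliary lemmas on `GZ` -/

private lemma GZ_add_self : ∀ a : GZ, a + a = 0 := by decide
private lemma GZ_add_eq_zero : ∀ a b : GZ, a + b = 0 → a = b := by decide
private lemma GZ_addA : ∀ a b : GZ, a + (b + a) = b := by decide
private lemma GZ_addB : ∀ a b : GZ, (a + b) + a = b := by decide
private lemma GZ_addC : ∀ a b : GZ, b + (a + b) = a := by decide
private lemma GZ_addD : ∀ a b : GZ, (a + b) + b = a := by decide
private lemma GZ_addE : ∀ a b : GZ, a + (a + b) = b := by decide

set_option synthInstance.maxSize 2000 in
private lemma GZ_cases : ∀ g h k : GZ,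
    (g = 0 ∨ h = 0 ∨ k = 0 ∨ g = h ∨ h = k ∨ g = k ∨ g = h + k ∨ h = g + k ∨ k = g + h) ∨
    (∀ x : GZ, x = 0 ∨ x = g ∨ x = h ∨ x = k ∨
      x = g + h ∨ x = g + k ∨ x = h + k ∨ x = g + h + k) := by
  decide

set_option synthInstance.maxSize 2000 in
private lemma GZ_exists_gen : ∀ a : GZ, a ≠ 0 → ∃ h k : GZ, ∀ x : GZ,
    x = 0 ∨ x = a ∨ x = h ∨ x = k ∨ x = a + h ∨ x = a + k ∨ x = h + k ∨ x = a + h + k := by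
  decide

private lemma GZ_closure_top {g h k : GZ}
    (hP : ∀ x : GZ, x = 0 ∨ x = g ∨ x = h ∨ x = k ∨
      x = g + h ∨ x = g + k ∨ x = h + k ∨ x = g + h + k) :
    AddSubgroup.closure ({g, h, k} : Set GZ) = ⊤ := by
  rw [eq_top_iff]
  intro x _
  have hg : g ∈ AddSubgroup.closure ({g, h, k} : Set GZ) :=
    AddSubgroup.subset_closure (by simp)
  have hh : h ∈ AddSubgroup.closure ({g, h, k} : Set GZ) :=
    AddSubgroup.subset_closure (by simp)
  have hk : k ∈ AddSubgroup.closure ({g, h, k} : Set GZ) :=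
    AddSubgroup.subset_closure (by simp)
  rcases hP x with rfl | rfl | rfl | rfl | rfl | rfl | rfl | rfl
  exacts [zero_mem _, hg, hh, hk, add_mem hg hh, add_mem hg hk, add_mem hh hk,
    add_mem (add_mem hg hh) hk]

set_option maxHeartbeats 1000000
set_option synthInstance.maxHeartbeats 400000

private lemma GZ_set_perm (g h k : GZ) : ({h, k, g} : Set GZ) = {g, h, k} := by
  ext x; simp only [Set.mem_insert_iff, Set.mem_singleton_iff]; tauto

theorem admissible_isGradedContraction_iff
    {L : Type} [LieRing L] [LieAlgebra ℂ L] (Γ : LieGrading GZ L)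
    (h0 : Γ.comp 0 = ⊥)
    (hsurj : ∀ g h : GZ, g ≠ 0 → h ≠ 0 → g ≠ h →
      Submodule.span ℂ {z : L | ∃ x ∈ Γ.comp g, ∃ y ∈ Γ.comp h, z = ⁅x, y⁆} = Γ.comp (g + h))
    (hgen : ∀ g h k : GZ, AddSubgroup.closure ({g, h, k} : Set GZ) = ⊤ →
      ∃ x ∈ Γ.comp g, ∃ y ∈ Γ.comp h, ∃ z ∈ Γ.comp k,
        LinearIndependent ℂ ![⁅x, ⁅y, z⁆⁆, ⁅y, ⁅z, x⁆⁆])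
    (ε : GZ → GZ → ℂ)
    (hadm : ∀ g : GZ, ε g g = 0 ∧ ε 0 g = 0 ∧ ε g 0 = 0) :
    (∃ c : GradedContraction Γ, c.eps = ε) ↔
      ((∀ g h : GZ, ε g h = ε h g) ∧
        ∀ g h k : GZ, AddSubgroup.closure ({g, h, k} : Set GZ) = ⊤ →
          ε g (h + k) * ε h k = ε k (g + h) * ε g h) := by
  constructor
  · rintro ⟨c, rfl⟩
    -- nonzero components are nonzero
    have hne : ∀ a : GZ, a ≠ 0 → ∃ x ∈ Γ.comp a, x ≠ (0 : L) := by
      intro a ha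
      obtain ⟨h, k, hP⟩ := GZ_exists_gen a ha
      obtain ⟨x, hx, y, hy, z, hz, hli⟩ := hgen a h k (GZ_closure_top hP)
      refine ⟨x, hx, fun hx0 => ?_⟩
      have := hli.ne_zero 0
      rw [hx0] at this
      simp at this
    -- skew symmetry of the contracted bracket
    have hskew : ∀ x y : L, c.bracket x y = - c.bracket y x := by
      intro x y
      have h1 := c.bracket_self (x + y)
      simp only [map_add, LinearMap.add_apply, c.bracket_self x, c.bracket_self y,
        zero_add, add_zero] at h1
      have h1' : c.bracket x y + c.bracket y x = 0 := by
        first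
        | exact h1
        | (rw [add_comm] at h1; exact h1)
      exact eq_neg_of_add_eq_zero_left h1'
    constructor
    · intro g h
      by_cases hg : g = 0
      · subst hg; rw [(hadm h).2.1, (hadm h).2.2]
      by_cases hh : h = 0
      · subst hh; rw [(hadm g).2.1, (hadm g).2.2]
      by_cases hgh : g = h
      · subst hgh; rfl
      have hghne : g + h ≠ 0 := fun H => hgh (GZ_add_eq_zero g h H)
      obtain ⟨w, hw, hwne⟩ := hne (g + h) hghne
      have hex : ∃ x ∈ Γ.comp g, ∃ y ∈ Γ.comp h, ⁅x, y⁆ ≠ (0 : L) := by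
        by_contra hno
        push_neg at hno
        have hbot : Submodule.span ℂ
            {z : L | ∃ x ∈ Γ.comp g, ∃ y ∈ Γ.comp h, z = ⁅x, y⁆} = ⊥ := by
          rw [Submodule.span_eq_bot]
          rintro z ⟨x, hx, y, hy, rfl⟩
          exact hno x hx y hy
        rw [hsurj g h hg hh hgh] at hbot
        rw [hbot, Submodule.mem_bot] at hw
        exact hwne hw
      obtain ⟨x, hx, y, hy, hxy⟩ := hex
      have e1 := c.bracket_apply g h x y hx hy
      have e2 := c.bracket_apply h g y x hy hx
      have e3 := hskew x y
      rw [e1, e2] at e3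
      have e4 : (⁅y, x⁆ : L) = -⁅x, y⁆ := by rw [← lie_skew x y, neg_neg]
      rw [e4, smul_neg, neg_neg] at e3
      have : (c.eps g h - c.eps h g) • ⁅x, y⁆ = 0 := by
        rw [sub_smul, e3, sub_self]
      rcases smul_eq_zero.mp this with h' | h'
      · exact sub_eq_zero.mp h'
      · exact absurd h' hxy
    · intro g h k hcl
      obtain ⟨x, hx, y, hy, z, hz, hli⟩ := hgen g h k hcl
      have hyz : c.bracket y z = c.eps h k • ⁅y, z⁆ := c.bracket_apply h k y z hy hz
      have hzx : c.bracket z x = c.eps k g • ⁅z, x⁆ := c.bracket_apply k g z x hz hx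
      have hxy : c.bracket x y = c.eps g h • ⁅x, y⁆ := c.bracket_apply g h x y hx hy
      have myz : c.bracket y z ∈ Γ.comp (h + k) := by
        rw [hyz]; exact Submodule.smul_mem _ _ (Γ.bracket_mem h k y z hy hz)
      have mzx : c.bracket z x ∈ Γ.comp (k + g) := by
        rw [hzx]; exact Submodule.smul_mem _ _ (Γ.bracket_mem k g z x hz hx)
      have mxy : c.bracket x y ∈ Γ.comp (g + h) := by
        rw [hxy]; exact Submodule.smul_mem _ _ (Γ.bracket_mem g h x y hx hy)
      have t1 : c.bracket x (c.bracket y z)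
          = (c.eps g (h + k) * c.eps h k) • ⁅x, ⁅y, z⁆⁆ := by
        rw [c.bracket_apply g (h + k) x _ hx myz, hyz, lie_smul, smul_smul]
      have t2 : c.bracket y (c.bracket z x)
          = (c.eps h (k + g) * c.eps k g) • ⁅y, ⁅z, x⁆⁆ := by
        rw [c.bracket_apply h (k + g) y _ hy mzx, hzx, lie_smul, smul_smul]
      have t3 : c.bracket z (c.bracket x y)
          = (c.eps k (g + h) * c.eps g h) • ⁅z, ⁅x, y⁆⁆ := by
        rw [c.bracket_apply k (g + h) z _ hz mxy, hxy, lie_smul, smul_smul]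
      have hJ := c.jacobi x y z
      rw [t1, t2, t3] at hJ
      have hjac : ⁅z, ⁅x, y⁆⁆ = -⁅x, ⁅y, z⁆⁆ - ⁅y, ⁅z, x⁆⁆ := by
        have hl := lie_jacobi x y z
        rw [eq_sub_iff_add_eq, eq_neg_iff_add_eq_zero]
        calc ⁅z, ⁅x, y⁆⁆ + ⁅y, ⁅z, x⁆⁆ + ⁅x, ⁅y, z⁆⁆
            = ⁅x, ⁅y, z⁆⁆ + ⁅y, ⁅z, x⁆⁆ + ⁅z, ⁅x, y⁆⁆ := by abel
          _ = 0 := hl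
      rw [hjac] at hJ
      rw [smul_sub, smul_neg] at hJ
      have key : (c.eps g (h + k) * c.eps h k - c.eps k (g + h) * c.eps g h) • ⁅x, ⁅y, z⁆⁆
          + (c.eps h (k + g) * c.eps k g - c.eps k (g + h) * c.eps g h) • ⁅y, ⁅z, x⁆⁆ = 0 := by
        rw [sub_smul, sub_smul]
        calc ((c.eps g (h + k) * c.eps h k) • ⁅x, ⁅y, z⁆⁆
                - (c.eps k (g + h) * c.eps g h) • ⁅x, ⁅y, z⁆⁆)
              + ((c.eps h (k + g) * c.eps k g) • ⁅y, ⁅z, x⁆⁆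
                - (c.eps k (g + h) * c.eps g h) • ⁅y, ⁅z, x⁆⁆)
            = (c.eps g (h + k) * c.eps h k) • ⁅x, ⁅y, z⁆⁆
              + (c.eps h (k + g) * c.eps k g) • ⁅y, ⁅z, x⁆⁆
              + (-((c.eps k (g + h) * c.eps g h) • ⁅x, ⁅y, z⁆⁆)
                - (c.eps k (g + h) * c.eps g h) • ⁅y, ⁅z, x⁆⁆) := by abel
          _ = 0 := hJ
      have := LinearIndependent.pair_iff.mp hli _ _ key
      exact sub_eq_zero.mp this.1
  · rintro ⟨hsym, hb2⟩
    classical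
    letI : DirectSum.Decomposition Γ.comp := Γ.internal.chooseDecomposition
    set π : GZ → L →ₗ[ℂ] L := fun g =>
      { toFun := fun x => (DirectSum.decompose Γ.comp x g : L)
        map_add' := by intro x y; simp [DirectSum.decompose_add]
        map_smul' := by intro c x; simp [DirectSum.decompose_smul, DirectSum.smul_apply] }
      with hπ
    have hmem : ∀ (g) (x : L), π g x ∈ Γ.comp g := fun g x => (DirectSum.decompose Γ.comp x g).2
    have hsame : ∀ (g) (x : L), x ∈ Γ.comp g → π g x = x := fun g x hx =>
      DirectSum.decompose_of_mem_same Γ.comp hx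
    have hneq : ∀ (g h) (x : L), x ∈ Γ.comp g → g ≠ h → π h x = 0 := by
      intro g h x hx hgh
      have := DirectSum.decompose_of_mem_ne Γ.comp hx hgh
      simpa [hπ] using this
    have hsum : ∀ x : L, ∑ g : GZ, π g x = x := by
      intro x
      have h1 := DirectSum.sum_support_decompose Γ.comp x
      calc ∑ g : GZ, π g x = ∑ g ∈ (DirectSum.decompose Γ.comp x).support, π g x := by
            refine (Finset.sum_subset (Finset.subset_univ _) ?_).symm
            intro g _ hg
            have h2 : DirectSum.decompose Γ.comp x g = 0 := DFinsupp.notMem_support_iff.mp hg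
            simp [hπ, h2]
        _ = x := h1
    set B : L →ₗ[ℂ] L →ₗ[ℂ] L := LinearMap.mk₂ ℂ
      (fun x y => ∑ g : GZ, ∑ h : GZ, ε g h • ⁅π g x, π h y⁆)
      (by
        intro m₁ m₂ n
        simp only [map_add, add_lie, smul_add, Finset.sum_add_distrib])
      (by
        intro c m n
        simp only [map_smul, smul_lie, Finset.smul_sum]
        exact Finset.sum_congr rfl fun g _ => Finset.sum_congr rfl fun h _ => smul_comm _ _ _)
      (by
        intro m n₁ n₂
        simp only [map_add, lie_add, smul_add, Finset.sum_add_distrib])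
      (by
        intro c m n
        simp only [map_smul, lie_smul, Finset.smul_sum]
        exact Finset.sum_congr rfl fun g _ => Finset.sum_congr rfl fun h _ => smul_comm _ _ _)
      with hB
    have hBapp : ∀ (g h : GZ) (x y : L), x ∈ Γ.comp g → y ∈ Γ.comp h →
        B x y = ε g h • ⁅x, y⁆ := by
      intro g h x y hx hy
      rw [hB]
      simp only [LinearMap.mk₂_apply]
      rw [Finset.sum_eq_single g]
      · rw [Finset.sum_eq_single h]
        · rw [hsame g x hx, hsame h y hy]
        · intro h' _ hne'
          rw [hneq h h' y hy hne'.symm, lie_zero, smul_zero]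
        · intro habs; exact absurd (Finset.mem_univ h) habs
      · intro g' _ hne'
        refine Finset.sum_eq_zero fun h' _ => ?_
        rw [hneq g g' x hx hne'.symm, zero_lie, smul_zero]
      · intro habs; exact absurd (Finset.mem_univ g) habs
    have hBself : ∀ x : L, B x x = 0 := by
      intro x
      have h1 : B x x = - B x x := by
        conv_lhs => rw [hB]
        simp only [LinearMap.mk₂_apply]
        calc ∑ g : GZ, ∑ h : GZ, ε g h • ⁅π g x, π h x⁆
            = ∑ a : GZ, ∑ b : GZ, ε b a • ⁅π b x, π a x⁆ := Finset.sum_comm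
          _ = ∑ a : GZ, ∑ b : GZ, -(ε a b • ⁅π a x, π b x⁆) := by
              refine Finset.sum_congr rfl fun a _ => Finset.sum_congr rfl fun b _ => ?_
              have e1 : (⁅π b x, π a x⁆ : L) = -⁅π a x, π b x⁆ := by
                rw [← lie_skew (π a x) (π b x), neg_neg]
              rw [hsym b a, e1, smul_neg]
          _ = -∑ a : GZ, ∑ b : GZ, ε a b • ⁅π a x, π b x⁆ := by
              simp [Finset.sum_neg_distrib]
          _ = - B x x := by rw [hB]; simp only [LinearMap.mk₂_apply]
      have h2 : (2 : ℂ) • B x x = 0 := by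
        rw [two_smul]
        nth_rw 2 [h1]
        rw [add_neg_cancel]
      rcases smul_eq_zero.mp h2 with h | h
      · exact absurd h two_ne_zero
      · exact h
    have hkey : ∀ (g h k : GZ) (a b c : L), a ∈ Γ.comp g → b ∈ Γ.comp h → c ∈ Γ.comp k →
        B a (B b c) + B b (B c a) + B c (B a b) = 0 := by
      intro g h k a b c ha hb hc
      have t1 : B a (B b c) = (ε g (h + k) * ε h k) • ⁅a, ⁅b, c⁆⁆ := by
        have m1 : B b c ∈ Γ.comp (h + k) := by
          rw [hBapp h k b c hb hc]
          exact Submodule.smul_mem _ _ (Γ.bracket_mem h k b c hb hc)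
        rw [hBapp g (h + k) a _ ha m1, hBapp h k b c hb hc, lie_smul, smul_smul]
      have t2 : B b (B c a) = (ε h (k + g) * ε k g) • ⁅b, ⁅c, a⁆⁆ := by
        have m1 : B c a ∈ Γ.comp (k + g) := by
          rw [hBapp k g c a hc ha]
          exact Submodule.smul_mem _ _ (Γ.bracket_mem k g c a hc ha)
        rw [hBapp h (k + g) b _ hb m1, hBapp k g c a hc ha, lie_smul, smul_smul]
      have t3 : B c (B a b) = (ε k (g + h) * ε g h) • ⁅c, ⁅a, b⁆⁆ := by
        have m1 : B a b ∈ Γ.comp (g + h) := by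
          rw [hBapp g h a b ha hb]
          exact Submodule.smul_mem _ _ (Γ.bracket_mem g h a b ha hb)
        rw [hBapp k (g + h) c _ hc m1, hBapp g h a b ha hb, lie_smul, smul_smul]
      rw [t1, t2, t3]
      rcases GZ_cases g h k with (H | H | H | H | H | H | H | H | H) | HP
      · subst H
        rw [h0, Submodule.mem_bot] at ha
        subst ha
        simp
      · subst H
        rw [h0, Submodule.mem_bot] at hb
        subst hb
        simp
      · subst H
        rw [h0, Submodule.mem_bot] at hc
        subst hc
        simp
      · -- g = h
        subst H
        rw [(hadm g).1, mul_zero, zero_smul, add_zero, add_comm k g, hsym k g, ← smul_add]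
        have hab : ⁅a, b⁆ = (0 : L) := by
          have hm := Γ.bracket_mem g g a b ha hb
          rw [GZ_add_self, h0, Submodule.mem_bot] at hm
          exact hm
        have hj := lie_jacobi a b c
        rw [hab, lie_zero, add_zero] at hj
        rw [hj, smul_zero]
      · -- h = k
        subst H
        rw [(hadm h).1, mul_zero, zero_smul, zero_add, add_comm h g, hsym g h, ← smul_add]
        have hbc : ⁅b, c⁆ = (0 : L) := by
          have hm := Γ.bracket_mem h h b c hb hc
          rw [GZ_add_self, h0, Submodule.mem_bot] at hm
          exact hm
        have hj := lie_jacobi a b c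
        rw [hbc, lie_zero, zero_add] at hj
        rw [hj, smul_zero]
      · -- g = k
        subst H
        rw [(hadm g).1, mul_zero, zero_smul, add_zero, add_comm h g, hsym h g, ← smul_add]
        have hca : ⁅c, a⁆ = (0 : L) := by
          have hm := Γ.bracket_mem g g c a hc ha
          rw [GZ_add_self, h0, Submodule.mem_bot] at hm
          exact hm
        have hj := lie_jacobi a b c
        rw [hca, lie_zero, add_zero] at hj
        rw [hj, smul_zero]
      · -- g = h + k
        subst H
        rw [(hadm (h + k)).1, zero_mul, zero_smul, GZ_addC h k, (hadm h).1, zero_mul,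
          zero_smul, GZ_addB h k, (hadm k).1, zero_mul, zero_smul]
        simp
      · -- h = g + k
        subst H
        rw [GZ_addD g k, (hadm g).1, zero_mul, zero_smul, add_comm k g,
          (hadm (g + k)).1, zero_mul, zero_smul, GZ_addE g k, (hadm k).1, zero_mul, zero_smul]
        simp
      · -- k = g + h
        subst H
        rw [GZ_addC g h, (hadm g).1, zero_mul, zero_smul, GZ_addB g h, (hadm h).1, zero_mul,
          zero_smul, (hadm (g + h)).1, zero_mul, zero_smul]
        simp
      · have hc1 := hb2 g h k (GZ_closure_top HP)
        have hc2 := hb2 h k g (by rw [GZ_set_perm g h k]; exact GZ_closure_top HP)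
        rw [hc2, ← hc1, ← smul_add, ← smul_add, lie_jacobi, smul_zero]
    have hJac : ∀ x y z : L,
        B x (B y z) + B y (B z x) + B z (B x y) = 0 := by
      have stepz : ∀ (g h : GZ) (a b : L), a ∈ Γ.comp g → b ∈ Γ.comp h →
          ∀ z : L, B a (B b z) + B b (B z a) + B z (B a b) = 0 := by
        intro g h a b ha hb
        refine DirectSum.Decomposition.inductionOn Γ.comp
          (motive := fun z => B a (B b z) + B b (B z a) + B z (B a b) = 0) ?_ ?_ ?_
        · simp
        · intro k m
          exact hkey g h k a b m ha hb m.2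
        · intro m m' hm hm'
          simp only [map_add, LinearMap.add_apply]
          calc B a (B b m) + B a (B b m') + (B b (B m a) + B b (B m' a))
                + (B m (B a b) + B m' (B a b))
              = (B a (B b m) + B b (B m a) + B m (B a b))
                + (B a (B b m') + B b (B m' a) + B m' (B a b)) := by abel
            _ = 0 := by rw [hm, hm', add_zero]
      have stepy : ∀ (g : GZ) (a : L), a ∈ Γ.comp g →
          ∀ y z : L, B a (B y z) + B y (B z a) + B z (B a y) = 0 := by
        intro g a ha
        refine DirectSum.Decomposition.inductionOn Γ.comp
          (motive := fun y => ∀ z : L, B a (B y z) + B y (B z a) + B z (B a y) = 0) ?_ ?_ ?_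
        · intro z; simp
        · intro h m
          exact stepz g h a m ha m.2
        · intro m m' hm hm' z
          simp only [map_add, LinearMap.add_apply]
          calc B a (B m z) + B a (B m' z) + (B m (B z a) + B m' (B z a))
                + (B z (B a m) + B z (B a m'))
              = (B a (B m z) + B m (B z a) + B z (B a m))
                + (B a (B m' z) + B m' (B z a) + B z (B a m')) := by abel
            _ = 0 := by rw [hm z, hm' z, add_zero]
      intro x
      refine DirectSum.Decomposition.inductionOn Γ.comp
        (motive := fun x => ∀ y z : L, B x (B y z) + B y (B z x) + B z (B x y) = 0) ?_ ?_ ?_ x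
      · intro y z; simp
      · intro g m
        exact stepy g m m.2
      · intro m m' hm hm' y z
        simp only [map_add, LinearMap.add_apply]
        calc B m (B y z) + B m' (B y z) + (B y (B z m) + B y (B z m'))
              + (B z (B m y) + B z (B m' y))
            = (B m (B y z) + B y (B z m) + B z (B m y))
              + (B m' (B y z) + B y (B z m') + B z (B m' y)) := by abel
          _ = 0 := by rw [hm y z, hm' y z, add_zero]
    exact ⟨⟨ε, B, hBapp, hBself, hJac⟩, rfl⟩
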